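/- Let n ≥ 3 be odd and let G = D_{2n} be the dihedral group of order 2n with presentation ⟨a, b : aⁿ = b² = 1, bab = a⁻¹⟩. Consider the subset G₀ = {b, ab}. Then the atoms of the monoid of product-one sequences over G₀ are exactly b^{[2]}, (ab)^{[2]}, and b^{[n]}·(ab)^{[n]}. -/

import Mathlib

/-- The set of products of the terms of the multiset `S`, over all orderings. -/
def piSet {G : Type*} [Group G] (S : Multiset G) : Set G :=
  {g | ∃ l : List G, (l : Multiset G) = S ∧ l.prod = g}

/-- The set of subsequence products: products of nonempty sub-multisets of `S`. -/
def subPiSet {G : Type*} [Group G] (S : Multiset G) : Set G :=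
  {g | ∃ T : Multiset G, T ≤ S ∧ T ≠ 0 ∧ g ∈ piSet T}

/-- `S` is a product-one sequence. -/
def IsProductOne {G : Type*} [Group G] (S : Multiset G) : Prop :=
  (1 : G) ∈ piSet S

/-- `S` is product-one free. -/
def ProductOneFree {G : Type*} [Group G] (S : Multiset G) : Prop :=
  (1 : G) ∉ subPiSet S

/-- `S` is an atom (minimal nontrivial product-one sequence) of the monoid `B(G)`. -/
def IsPOAtom {G : Type*} [Group G] (S : Multiset G) : Prop :=
  S ≠ 0 ∧ IsProductOne S ∧
    ∀ T U : Multiset G, IsProductOne T → IsProductOne U → T + U = S → T = 0 ∨ U = 0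

/-- The large Davenport constant `D(G)`. -/
noncomputable def bigD (G : Type*) [Group G] : ℕ :=
  sSup {n | ∃ S : Multiset G, IsPOAtom S ∧ Multiset.card S = n}

/-- The small Davenport constant `d(G)`. -/
noncomputable def smalld (G : Type*) [Group G] : ℕ :=
  sSup {n | ∃ S : Multiset G, ProductOneFree S ∧ Multiset.card S = n}

/-- The set of factorization lengths of `S` into atoms of `B(G)`. -/
def lengthSet {G : Type*} [Group G] (S : Multiset G) : Set ℕ :=
  {k | ∃ L : List (Multiset G), L.length = k ∧ (∀ A ∈ L, IsPOAtom A) ∧ L.sum = S}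

namespace Stmt15Aux

open DihedralGroup Multiset

variable {n : ℕ}

/-- alternating count of `sr (-1)`'s. -/
def hC : List (DihedralGroup n) → ℤ
  | [] => 0
  | x :: l => (if x = sr (-1) then -1 else 0) - hC l

/-- alternating count of `sr 0`'s. -/
def hB : List (DihedralGroup n) → ℤ
  | [] => 0
  | x :: l => (if x = sr 0 then -1 else 0) - hB l

lemma hC_abs (l : List (DihedralGroup n)) : |hC l| ≤ l.count (sr (-1)) := by
  induction l with
  | nil => simp [hC]
  | cons x l ih =>
      rw [hC]
      refine (abs_sub _ _).trans ?_
      rw [List.count_cons]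
      by_cases h : x = sr (-1) <;> simp [h] <;> push_cast <;> omega

lemma hB_abs (l : List (DihedralGroup n)) : |hB l| ≤ l.count (sr 0) := by
  induction l with
  | nil => simp [hB]
  | cons x l ih =>
      rw [hB]
      refine (abs_sub _ _).trans ?_
      rw [List.count_cons]
      by_cases h : x = sr 0 <;> simp [h] <;> push_cast <;> omega

lemma hC_parity (l : List (DihedralGroup n)) : hC l % 2 = (l.count (sr (-1)) : ℤ) % 2 := by
  induction l with
  | nil => simp [hC]
  | cons x l ih =>
      rw [hC, List.count_cons]
      by_cases h : x = sr (-1) <;> simp [h] <;> push_cast <;> omega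

lemma hBC (l : List (DihedralGroup n))
    (hl : ∀ x ∈ l, x = sr 0 ∨ x = sr (-1 : ZMod n)) (hbc : (sr 0 : DihedralGroup n) ≠ sr (-1)) :
    hB l + hC l = if Even l.length then 0 else -1 := by
  induction l with
  | nil => simp [hB, hC]
  | cons x l ih =>
      have ihl := ih (fun y hy => hl y (List.mem_cons_of_mem _ hy))
      rw [hB, hC, List.length_cons]
      by_cases he : Even l.length <;>
        rcases hl x List.mem_cons_self with h | h <;>
          simp [h, hbc, hbc.symm, Nat.even_add_one, he] at ihl ⊢ <;> omega

lemma prod_formula (l : List (DihedralGroup n)) (hbc : (sr 0 : DihedralGroup n) ≠ sr (-1))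
    (hl : ∀ x ∈ l, x = sr 0 ∨ x = sr (-1 : ZMod n)) :
    l.prod = if Even l.length then r ((-hC l : ℤ) : ZMod n) else sr ((hC l : ℤ) : ZMod n) := by
  induction l with
  | nil => simp [hC, one_def, -r_zero]
  | cons x l ih =>
      have ihl := ih (fun y hy => hl y (List.mem_cons_of_mem _ hy))
      rw [List.prod_cons, ihl, hC, List.length_cons]
      by_cases he : Even l.length <;>
        rcases hl x List.mem_cons_self with h | h <;>
          simp [h, hbc, hbc.symm, Nat.even_add_one, he] <;> push_cast <;> ring_nf

lemma len_eq (l : List (DihedralGroup n)) (hbc : (sr 0 : DihedralGroup n) ≠ sr (-1))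
    (hl : ∀ x ∈ l, x = sr 0 ∨ x = sr (-1 : ZMod n)) :
    l.length = l.count (sr 0) + l.count (sr (-1)) := by
  induction l with
  | nil => simp
  | cons x l ih =>
      have ihl := ih (fun y hy => hl y (List.mem_cons_of_mem _ hy))
      rcases hl x List.mem_cons_self with h | h <;>
        simp [h, List.count_cons, hbc, hbc.symm, ihl] <;> omega

lemma forward (hn : 3 ≤ n) (l : List (DihedralGroup n))
    (hl : ∀ x ∈ l, x = sr 0 ∨ x = sr (-1 : ZMod n)) (hp : l.prod = 1) :
    (Even (l.count (sr 0)) ∧ Even (l.count (sr (-1)))) ∨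
    (Odd (l.count (sr 0)) ∧ Odd (l.count (sr (-1))) ∧
      n ≤ l.count (sr 0) ∧ n ≤ l.count (sr (-1))) := by
  haveI : NeZero n := ⟨by omega⟩
  haveI : Fact (1 < n) := ⟨by omega⟩
  have hbc : (sr 0 : DihedralGroup n) ≠ sr (-1) := by
    simp only [ne_eq, sr.injEq]
    intro h
    have : (1 : ZMod n) = 0 := by linear_combination h
    exact one_ne_zero this
  have hpf := prod_formula l hbc hl
  have hlen := len_eq l hbc hl
  by_cases he : Even l.length
  · rw [if_pos he, hp, one_def] at hpf
    have h0 : ((-hC l : ℤ) : ZMod n) = 0 := (r.injEq _ _).mp hpf.symm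
    have hdvd : (n : ℤ) ∣ hC l :=
      dvd_neg.mp ((ZMod.intCast_zmod_eq_zero_iff_dvd _ n).mp h0)
    by_cases hq : Even (l.count (sr (-1)))
    · left
      refine ⟨?_, hq⟩
      rcases he with ⟨k, hk⟩
      rcases hq with ⟨m, hm⟩
      exact ⟨k - m, by omega⟩
    · right
      have hqo : Odd (l.count (sr (-1))) := Nat.odd_iff.mpr (by
        rcases Nat.even_or_odd (l.count (sr (-1))) with h | h
        · exact absurd h hq
        · exact Nat.odd_iff.mp h)
      have hpar := hC_parity l
      have hCne : hC l ≠ 0 := by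
        intro h
        rw [h] at hpar
        have := Nat.odd_iff.mp hqo
        omega
      have hnle : (n : ℤ) ≤ |hC l| :=
        Int.le_of_dvd (abs_pos.mpr hCne) ((dvd_abs _ _).mpr hdvd)
      have hq' : n ≤ l.count (sr (-1)) := by
        have := hC_abs l
        exact_mod_cast hnle.trans this
      have hsum := hBC l hl hbc
      rw [if_pos he] at hsum
      have hp' : n ≤ l.count (sr 0) := by
        have habs : |hB l| = |hC l| := by rw [show hB l = -hC l by omega, abs_neg]
        have := hB_abs l
        rw [habs] at this
        exact_mod_cast hnle.trans this
      refine ⟨?_, hqo, hp', hq'⟩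
      rcases he with ⟨k, hk⟩
      rw [Nat.odd_iff] at hqo ⊢
      omega
  · rw [if_neg he, hp, one_def] at hpf
    exact absurd hpf.symm (by simp [-r_zero])

lemma prodOne_zero {G : Type*} [Group G] : IsProductOne (0 : Multiset G) :=
  ⟨[], rfl, rfl⟩

lemma prodOne_add {G : Type*} [Group G] {T U : Multiset G}
    (hT : IsProductOne T) (hU : IsProductOne U) : IsProductOne (T + U) := by
  obtain ⟨l1, hl1, hp1⟩ := hT
  obtain ⟨l2, hl2, hp2⟩ := hU
  exact ⟨l1 ++ l2, by rw [← Multiset.coe_add, hl1, hl2],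
    by rw [List.prod_append, hp1, hp2, one_mul]⟩

lemma prodOne_two {G : Type*} [Group G] {x : G} (hx : x * x = 1) :
    IsProductOne (Multiset.replicate 2 x) :=
  ⟨[x, x], rfl, by simp [hx]⟩

lemma prodOne_even {G : Type*} [Group G] {x : G} (hx : x * x = 1) (k : ℕ) :
    IsProductOne (Multiset.replicate (2 * k) x) := by
  induction k with
  | zero => exact prodOne_zero
  | succ k ih =>
      have h2 : 2 * (k + 1) = 2 + 2 * k := by ring
      rw [h2, Multiset.replicate_add]
      exact prodOne_add (prodOne_two hx) ih

lemma prodOne_even' {G : Type*} [Group G] {x : G} (hx : x * x = 1) {m : ℕ} (hm : Even m) :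
    IsProductOne (Multiset.replicate m x) := by
  obtain ⟨k, hk⟩ := hm
  have : m = 2 * k := by omega
  rw [this]; exact prodOne_even hx k

lemma bb_one : (sr 0 : DihedralGroup n) * sr 0 = 1 := by
  rw [sr_mul_sr, sub_self, ← one_def]

lemma cc_one : (sr (-1) : DihedralGroup n) * sr (-1) = 1 := by
  rw [sr_mul_sr, sub_self, ← one_def]

lemma bc_pow (k : ℕ) : ∃ l : List (DihedralGroup n),
    (l : Multiset (DihedralGroup n)) =
      Multiset.replicate k (sr 0) + Multiset.replicate k (sr (-1)) ∧
    l.prod = (sr 0 * sr (-1 : ZMod n)) ^ k := by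
  induction k with
  | zero => exact ⟨[], by simp, by simp⟩
  | succ k ih =>
      obtain ⟨l, hl, hp⟩ := ih
      refine ⟨sr 0 :: sr (-1) :: l, ?_, ?_⟩
      · show (sr 0) ::ₘ (sr (-1)) ::ₘ (l : Multiset (DihedralGroup n)) = _
        rw [hl, Multiset.replicate_succ, Multiset.replicate_succ,
          Multiset.cons_add, Multiset.add_cons]
      · rw [List.prod_cons, List.prod_cons, hp, ← mul_assoc, ← pow_succ']

lemma prodOne_ncnc (hn : 0 < n) : IsProductOne
    (Multiset.replicate n (sr 0 : DihedralGroup n) + Multiset.replicate n (sr (-1))) := by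
  haveI : NeZero n := ⟨by omega⟩
  obtain ⟨l, hl, hp⟩ := bc_pow (n := n) n
  refine ⟨l, hl, ?_⟩
  rw [hp]
  have h1 : (sr 0 * sr (-1 : ZMod n) : DihedralGroup n) = r (-1) := by
    rw [sr_mul_sr]; ring_nf
  have h2 : (r (-1) : DihedralGroup n) = (r 1)⁻¹ := by
    rw [eq_inv_iff_mul_eq_one, r_mul_r, neg_add_cancel, ← one_def]
  rw [h1, h2, inv_pow, r_one_pow, ZMod.natCast_self, ← one_def, inv_one]

lemma prodOne_ee {p q : ℕ} (hp : Even p) (hq : Even q) :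
    IsProductOne (Multiset.replicate p (sr 0 : DihedralGroup n) +
      Multiset.replicate q (sr (-1))) :=
  prodOne_add (prodOne_even' bb_one hp) (prodOne_even' cc_one hq)

lemma prodOne_oo (hn : 0 < n) (hno : Odd n) {p q : ℕ} (hp : n ≤ p) (hq : n ≤ q)
    (hpo : Odd p) (hqo : Odd q) :
    IsProductOne (Multiset.replicate p (sr 0 : DihedralGroup n) +
      Multiset.replicate q (sr (-1))) := by
  have h1 : p = n + (p - n) := by omega
  have h2 : q = n + (q - n) := by omega
  rw [h1, h2, Multiset.replicate_add, Multiset.replicate_add, add_add_add_comm]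
  refine prodOne_add (prodOne_ncnc hn) (prodOne_add (prodOne_even' bb_one ?_)
    (prodOne_even' cc_one ?_)) <;>
  · rw [Nat.even_sub (by omega)]
    rw [Nat.odd_iff] at *
    simp [Nat.even_iff, hno]
    omega

lemma struct {α : Type*} [DecidableEq α] {b c : α} (hbc : b ≠ c) (S : Multiset α)
    (hS : ∀ x ∈ S, x = b ∨ x = c) :
    S = Multiset.replicate (S.count b) b + Multiset.replicate (S.count c) c := by
  ext x
  rw [Multiset.count_add, Multiset.count_replicate, Multiset.count_replicate]
  by_cases hxb : x = b
  · subst hxb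
    simp [hbc, Ne.symm hbc]
  by_cases hxc : x = c
  · subst hxc
    simp [hbc, Ne.symm hbc]
  · have hx : x ∉ S := fun h => by rcases hS x h with h' | h' <;> [exact hxb h'; exact hxc h']
    simp [hxb, hxc, Ne.symm hxb, Ne.symm hxc, Multiset.count_eq_zero.mpr hx]

end Stmt15Aux

open DihedralGroup Multiset Stmt15Aux in
theorem stmt15 (n : ℕ) (hn : 3 ≤ n) (ho : Odd n) :
    {S : Multiset (DihedralGroup n) |
        (∀ x ∈ S, x = DihedralGroup.sr 0 ∨ x = DihedralGroup.r 1 * DihedralGroup.sr 0) ∧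
        IsPOAtom S} =
      {Multiset.replicate 2 (DihedralGroup.sr 0),
       Multiset.replicate 2 (DihedralGroup.r 1 * DihedralGroup.sr 0),
       Multiset.replicate n (DihedralGroup.sr 0) +
         Multiset.replicate n (DihedralGroup.r 1 * DihedralGroup.sr 0)} := by
  haveI : NeZero n := ⟨by omega⟩
  haveI : Fact (1 < n) := ⟨by omega⟩
  have hc : (r 1 : DihedralGroup n) * sr 0 = sr (-1) := by rw [r_mul_sr, zero_sub]
  have hbc : (sr 0 : DihedralGroup n) ≠ sr (-1) := by
    simp only [ne_eq, sr.injEq]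
    intro h
    have h1 : (1 : ZMod n) = 0 := by linear_combination h
    exact one_ne_zero h1
  -- helper to extract count data from a product-one multiset
  have key : ∀ T : Multiset (DihedralGroup n),
      (∀ x ∈ T, x = sr 0 ∨ x = sr (-1)) → IsProductOne T →
      (Even (T.count (sr 0)) ∧ Even (T.count (sr (-1)))) ∨
      (Odd (T.count (sr 0)) ∧ Odd (T.count (sr (-1))) ∧
        n ≤ T.count (sr 0) ∧ n ≤ T.count (sr (-1))) := by
    intro T hT hpo
    obtain ⟨l, hl, hp⟩ := hpo
    have hlm : ∀ x ∈ l, x = sr 0 ∨ x = sr (-1) := fun x hx => hT x (hl ▸ Multiset.mem_coe.mpr hx)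
    have h1 : l.count (sr 0) = T.count (sr 0) := by rw [← hl, Multiset.coe_count]
    have h2 : l.count (sr (-1)) = T.count (sr (-1)) := by rw [← hl, Multiset.coe_count]
    rw [← h1, ← h2]
    exact forward hn l hlm hp
  ext S
  simp only [Set.mem_setOf_eq, Set.mem_insert_iff, Set.mem_singleton_iff, hc]
  constructor
  · rintro ⟨hS, hne, hpo, hmin⟩
    have hS' : ∀ x ∈ S, x = sr 0 ∨ x = sr (-1) := hS
    set p := S.count (sr 0) with hp
    set q := S.count (sr (-1)) with hq
    have hst : S = Multiset.replicate p (sr 0) + Multiset.replicate q (sr (-1)) :=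
      struct hbc S hS'
    have hpq : p + q ≠ 0 := by
      intro h
      apply hne
      rw [hst]
      have hp0 : p = 0 := by omega
      have hq0 : q = 0 := by omega
      rw [hp0, hq0]; simp
    rcases key S hS' hpo with ⟨hpe, hqe⟩ | ⟨hpod, hqod, hpn, hqn⟩
    · -- even-even case
      rcases Nat.eq_zero_or_pos p with hp0 | hppos
      · -- S = c^q
        have hq2 : 2 ≤ q := by
          rcases Nat.even_iff.mp hqe with h
          omega
        have hsplit : Multiset.replicate 2 (sr (-1) : DihedralGroup n) +
            Multiset.replicate (q - 2) (sr (-1)) = S := by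
          rw [hst, hp0]
          simp only [Multiset.replicate_zero, zero_add]
          rw [← Multiset.replicate_add]
          congr 1
          omega
        rcases hmin _ _ (prodOne_two cc_one)
            (prodOne_even' cc_one (by rw [Nat.even_sub hq2] at *; simp [hq, hqe])) hsplit with h | h
        · exact absurd h (by simp)
        · have hq2' : q = 2 := by
            have := congrArg Multiset.card h
            simp at this
            omega
          right; left
          rw [hst, hp0, hq2']
          simp
      · -- S = b^2
        have hp2 : 2 ≤ p := by
          rcases Nat.even_iff.mp hpe with h
          omega
        have hsplit : Multiset.replicate 2 (sr 0 : DihedralGroup n) +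
            (Multiset.replicate (p - 2) (sr 0) + Multiset.replicate q (sr (-1))) = S := by
          rw [hst, ← add_assoc, ← Multiset.replicate_add]
          congr 2
          omega
        rcases hmin _ _ (prodOne_two bb_one)
            (prodOne_ee (by rw [Nat.even_sub hp2] at *; simp [hp, hpe]) hqe) hsplit with h | h
        · exact absurd h (by simp)
        · have hc0 := congrArg Multiset.card h
          simp at hc0
          obtain ⟨h1, h2⟩ := hc0
          left
          rw [hst, show p = 2 by omega, hq, Multiset.count_eq_zero.mpr h2]
          simp
    · -- odd-odd case
      have hpeq : p = n := by
        by_contra hne'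
        have hp2 : n + 2 ≤ p := by
          rw [Nat.odd_iff] at hpod ho
          omega
        have hsplit : Multiset.replicate 2 (sr 0 : DihedralGroup n) +
            (Multiset.replicate (p - 2) (sr 0) + Multiset.replicate q (sr (-1))) = S := by
          rw [hst, ← add_assoc, ← Multiset.replicate_add]
          congr 2
          omega
        rcases hmin _ _ (prodOne_two bb_one)
            (prodOne_oo (by omega) ho (by omega) hqn
              (by rw [Nat.odd_iff] at *; omega) hqod) hsplit with h | h
        · exact absurd h (by simp)
        · have hc0 := congrArg Multiset.card h
          simp at hc0
          omega
      have hqeq : q = n := by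
        by_contra hne'
        have hq2 : n + 2 ≤ q := by
          rw [Nat.odd_iff] at hqod ho
          omega
        have hsplit : Multiset.replicate 2 (sr (-1) : DihedralGroup n) +
            (Multiset.replicate p (sr 0) + Multiset.replicate (q - 2) (sr (-1))) = S := by
          rw [hst]
          have : Multiset.replicate q (sr (-1) : DihedralGroup n) =
              Multiset.replicate 2 (sr (-1)) + Multiset.replicate (q - 2) (sr (-1)) := by
            rw [← Multiset.replicate_add]; congr 1; omega
          rw [this]
          abel
        rcases hmin _ _ (prodOne_two cc_one)
            (prodOne_oo (by omega) ho hpn (by omega) hpod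
              (by rw [Nat.odd_iff] at *; omega)) hsplit with h | h
        · exact absurd h (by simp)
        · have hc0 := congrArg Multiset.card h
          simp at hc0
          omega
      right; right
      rw [hst, hpeq, hqeq]
  · -- backward direction
    have hmem2b : ∀ x ∈ Multiset.replicate 2 (sr 0 : DihedralGroup n),
        x = sr 0 ∨ x = sr (-1) := fun x hx => Or.inl (Multiset.eq_of_mem_replicate hx)
    have hmem2c : ∀ x ∈ Multiset.replicate 2 (sr (-1) : DihedralGroup n),
        x = sr 0 ∨ x = sr (-1) := fun x hx => Or.inr (Multiset.eq_of_mem_replicate hx)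
    have hmemn : ∀ x ∈ Multiset.replicate n (sr 0 : DihedralGroup n) +
        Multiset.replicate n (sr (-1)), x = sr 0 ∨ x = sr (-1) := by
      intro x hx
      rcases Multiset.mem_add.mp hx with h | h
      · exact Or.inl (Multiset.eq_of_mem_replicate h)
      · exact Or.inr (Multiset.eq_of_mem_replicate h)
    -- an atom-killer for singletons
    have hsingle : ∀ (e : ZMod n), (sr e : DihedralGroup n) = sr 0 ∨ (sr e) = sr (-1) →
        ¬ IsProductOne (Multiset.replicate 1 (sr e : DihedralGroup n)) := by
      intro e he hpo
      have h := key _ (fun x hx => (Multiset.eq_of_mem_replicate hx) ▸ he) hpo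
      rcases he with he | he <;>
        simp [he, Multiset.count_replicate, hbc, Ne.symm hbc] at h <;>
      · rcases h with ⟨h1, _⟩ | ⟨_, _, h3⟩
        · exact (Nat.not_even_one) h1
        · omega
    have hrep2 : ∀ (e : ZMod n), (sr e : DihedralGroup n) = sr 0 ∨ (sr e) = sr (-1) →
        IsPOAtom (Multiset.replicate 2 (sr e : DihedralGroup n)) := by
      intro e he
      have hee : (sr e : DihedralGroup n) * sr e = 1 := by
        rw [sr_mul_sr, sub_self, ← one_def]
      refine ⟨by simp, prodOne_two hee, ?_⟩
      intro T U hT hU hTU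
      have hTle : T ≤ Multiset.replicate 2 (sr e) := hTU ▸ Multiset.le_add_right T U
      have hUle : U ≤ Multiset.replicate 2 (sr e) := hTU ▸ Multiset.le_add_left U T
      have hTst : T = Multiset.replicate (Multiset.card T) (sr e) :=
        Multiset.eq_replicate_card.mpr fun x hx =>
          Multiset.eq_of_mem_replicate (Multiset.mem_of_le hTle hx)
      have hUst : U = Multiset.replicate (Multiset.card U) (sr e) :=
        Multiset.eq_replicate_card.mpr fun x hx =>
          Multiset.eq_of_mem_replicate (Multiset.mem_of_le hUle hx)
      have hcard : Multiset.card T + Multiset.card U = 2 := by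
        have := congrArg Multiset.card hTU
        simpa using this
      rcases Nat.lt_or_ge (Multiset.card T) 1 with h1 | h1
      · left; exact Multiset.card_eq_zero.mp (by omega)
      rcases Nat.lt_or_ge (Multiset.card U) 1 with h2 | h2
      · right; exact Multiset.card_eq_zero.mp (by omega)
      exfalso
      have hT1 : Multiset.card T = 1 := by omega
      exact hsingle e he (hT1 ▸ hTst ▸ hT)
    rintro (rfl | rfl | rfl)
    · exact ⟨fun x hx => Or.inl (Multiset.eq_of_mem_replicate hx), hrep2 0 (Or.inl rfl)⟩
    · exact ⟨fun x hx => Or.inr (Multiset.eq_of_mem_replicate hx), hrep2 (-1) (Or.inr rfl)⟩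
    · refine ⟨hmemn, ?_⟩
      refine ⟨?_, prodOne_ncnc (by omega), ?_⟩
      · intro h0
        have := congrArg Multiset.card h0
        simp at this
        omega
      intro T U hT hU hTU
      have hTle : T ≤ _ := hTU ▸ Multiset.le_add_right T U
      have hUle : U ≤ _ := hTU ▸ Multiset.le_add_left U T
      have hTm : ∀ x ∈ T, x = sr 0 ∨ x = sr (-1) :=
        fun x hx => hmemn x (Multiset.mem_of_le hTle hx)
      have hUm : ∀ x ∈ U, x = sr 0 ∨ x = sr (-1) :=
        fun x hx => hmemn x (Multiset.mem_of_le hUle hx)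
      have hcb : T.count (sr 0) + U.count (sr 0) = n := by
        have := congrArg (Multiset.count (sr 0)) hTU
        simpa [Multiset.count_replicate, Ne.symm hbc] using this
      have hcc : T.count (sr (-1)) + U.count (sr (-1)) = n := by
        have := congrArg (Multiset.count (sr (-1))) hTU
        simpa [Multiset.count_replicate, hbc] using this
      rcases key T hTm hT with ⟨hT1, hT2⟩ | ⟨_, _, hT3, hT4⟩
      · rcases key U hUm hU with ⟨hU1, hU2⟩ | ⟨_, _, hU3, hU4⟩
        · exfalso
          rw [Nat.odd_iff] at ho
          rw [Nat.even_iff] at hT1 hU1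
          omega
        · left
          rw [struct hbc T hTm, show T.count (sr 0) = 0 by omega,
            show T.count (sr (-1)) = 0 by omega]
          simp
      · right
        rw [struct hbc U hUm, show U.count (sr 0) = 0 by omega,
          show U.count (sr (-1)) = 0 by omega]
        simp
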